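/- Let f(w₁) = w₁·ln(2w₁) + (1-w₁)·ln(2(1-w₁)) - c·6(1/2 - w₁)² for a constant c > 0. Then f has at most one zero in the interval [0, 1/2). -/

import Mathlib

noncomputable def gAux (c w : ℝ) : ℝ :=
  Real.log 2 + w * Real.log w + (1 - w) * Real.log (1 - w) - c * (6 * (1 / 2 - w) ^ 2)

noncomputable def gAux' (c w : ℝ) : ℝ :=
  Real.log w - Real.log (1 - w) + 12 * c * (1 / 2 - w)

noncomputable def gAux'' (c w : ℝ) : ℝ := 1 / w + 1 / (1 - w) - 12 * c

lemma gAux_cont (c : ℝ) : Continuous (gAux c) := by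
  unfold gAux
  have h1 : Continuous fun w : ℝ => w * Real.log w := Real.continuous_mul_log
  have h2 : Continuous fun w : ℝ => (1 - w) * Real.log (1 - w) :=
    Real.continuous_mul_log.comp (continuous_const.sub continuous_id)
  continuity

lemma gAux_deriv (c : ℝ) {w : ℝ} (hw : w ∈ Set.Ioo (0:ℝ) 1) :
    HasDerivAt (gAux c) (gAux' c w) w := by
  obtain ⟨hw0, hw1⟩ := hw
  have hw0' : w ≠ 0 := ne_of_gt hw0
  have hw1' : (1 - w) ≠ 0 := by linarith
  have h1 : HasDerivAt (fun w : ℝ => w * Real.log w) (Real.log w + 1) w :=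
    Real.hasDerivAt_mul_log hw0'
  have hsub : HasDerivAt (fun w : ℝ => 1 - w) (-1) w := by
    simpa using (hasDerivAt_id w).const_sub 1
  have h2 : HasDerivAt (fun w : ℝ => (1 - w) * Real.log (1 - w))
      ((Real.log (1 - w) + 1) * (-1)) w :=
    (Real.hasDerivAt_mul_log hw1').comp w hsub
  have hsub2 : HasDerivAt (fun w : ℝ => (1/2 - w : ℝ)) (-1) w := by
    simpa using (hasDerivAt_id w).const_sub (1/2 : ℝ)
  have h3 : HasDerivAt (fun w : ℝ => c * (6 * (1/2 - w) ^ 2))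
      (c * (6 * ((2 : ℕ) * (1/2 - w) ^ 1 * (-1)))) w :=
    (((hsub2.pow 2)).const_mul 6).const_mul c
  have h := ((h1.const_add (Real.log 2)).add h2).sub h3
  refine h.congr_deriv ?_
  unfold gAux'; push_cast; ring

lemma gAux'_deriv (c : ℝ) {w : ℝ} (hw : w ∈ Set.Ioo (0:ℝ) 1) :
    HasDerivAt (gAux' c) (gAux'' c w) w := by
  obtain ⟨hw0, hw1⟩ := hw
  have hw0' : w ≠ 0 := ne_of_gt hw0
  have hw1' : (1 - w) ≠ 0 := by linarith
  have h1 : HasDerivAt Real.log w⁻¹ w := Real.hasDerivAt_log hw0'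
  have hsub : HasDerivAt (fun w : ℝ => 1 - w) (-1) w := by
    simpa using (hasDerivAt_id w).const_sub 1
  have h2 : HasDerivAt (fun w : ℝ => Real.log (1 - w)) ((1 - w)⁻¹ * (-1)) w :=
    (Real.hasDerivAt_log hw1').comp w hsub
  have hsub2 : HasDerivAt (fun w : ℝ => (1/2 - w : ℝ)) (-1) w := by
    simpa using (hasDerivAt_id w).const_sub (1/2 : ℝ)
  have h3 : HasDerivAt (fun w : ℝ => 12 * c * (1/2 - w)) (12 * c * (-1)) w :=
    hsub2.const_mul (12 * c)
  have h := (h1.sub h2).add h3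
  refine h.congr_deriv ?_
  unfold gAux''
  field_simp
  ring

lemma gAux_eq (c w : ℝ) (hw : w ∈ Set.Ico (0:ℝ) (1/2)) :
    w * Real.log (2 * w) + (1 - w) * Real.log (2 * (1 - w))
      - c * (6 * (1 / 2 - w) ^ 2) = gAux c w := by
  obtain ⟨hw0, hw1⟩ := hw
  have h1 : (1 - w) > 0 := by linarith
  have e1 : Real.log (2 * (1 - w)) = Real.log 2 + Real.log (1 - w) :=
    Real.log_mul two_ne_zero (ne_of_gt h1)
  rcases eq_or_lt_of_le hw0 with h | h
  · subst h
    simp [gAux]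
  · have e2 : Real.log (2 * w) = Real.log 2 + Real.log w :=
      Real.log_mul two_ne_zero (ne_of_gt h)
    rw [e1, e2]; unfold gAux; ring

lemma gAux_half (c : ℝ) : gAux c (1/2) = 0 := by
  unfold gAux
  have h2 : Real.log (1 - 1/2 : ℝ) = Real.log (1/2) := by norm_num
  rw [h2, show (1/2:ℝ) = 2⁻¹ by norm_num, Real.log_inv]; ring

lemma gAux'_half (c : ℝ) : gAux' c (1/2) = 0 := by
  unfold gAux'
  norm_num

lemma key (c : ℝ) (hc : 0 < c) (a b : ℝ) (ha : a ∈ Set.Ico (0:ℝ) (1/2))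
    (hb : b ∈ Set.Ico (0:ℝ) (1/2)) (hab : a < b)
    (hga : gAux c a = 0) (hgb : gAux c b = 0) : False := by
  obtain ⟨ha0, ha1⟩ := ha
  obtain ⟨hb0, hb1⟩ := hb
  -- Rolle on [a, b]
  obtain ⟨x, hx, hx0⟩ := exists_hasDerivAt_eq_zero hab
    ((gAux_cont c).continuousOn) (hga.trans hgb.symm)
    (fun w hw => gAux_deriv c ⟨by linarith [hw.1], by linarith [hw.2]⟩)
  -- Rolle on [b, 1/2]
  obtain ⟨y, hy, hy0⟩ := exists_hasDerivAt_eq_zero hb1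
    ((gAux_cont c).continuousOn) (hgb.trans (gAux_half c).symm)
    (fun w hw => gAux_deriv c ⟨by linarith [hw.1], by linarith [hw.2]⟩)
  have hx0' : 0 < x := lt_of_le_of_lt ha0 hx.1
  have hxy : x < y := lt_trans hx.2 hy.1
  have hy1 : y < 1/2 := hy.2
  -- Rolle on [x, y] for gAux'
  obtain ⟨u, hu, hu0⟩ := exists_hasDerivAt_eq_zero hxy
    (fun w hw => ((gAux'_deriv c (show w ∈ Set.Ioo (0:ℝ) 1 by
      constructor <;> [linarith [hw.1]; linarith [hw.2]])).continuousAt).continuousWithinAt)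
    (hx0.trans hy0.symm)
    (fun w hw => gAux'_deriv c ⟨by linarith [hw.1], by linarith [hw.2]⟩)
  -- Rolle on [y, 1/2] for gAux'
  obtain ⟨v, hv, hv0⟩ := exists_hasDerivAt_eq_zero hy1
    (fun w hw => ((gAux'_deriv c (show w ∈ Set.Ioo (0:ℝ) 1 by
      constructor <;> [linarith [hw.1]; linarith [hw.2]])).continuousAt).continuousWithinAt)
    (hy0.trans (gAux'_half c).symm)
    (fun w hw => gAux'_deriv c ⟨by linarith [hw.1], by linarith [hw.2]⟩)
  have hu0' : 0 < u := lt_trans hx0' hu.1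
  have huv : u < v := lt_trans hu.2 hv.1
  have hv1 : v < 1/2 := hv.2
  have hu1 : u < 1/2 := lt_trans huv hv1
  unfold gAux'' at hu0 hv0
  have hune : u ≠ 0 := ne_of_gt hu0'
  have h1u : (1 - u) ≠ 0 := by linarith
  have hv0' : 0 < v := lt_trans hu0' huv
  have hvne : v ≠ 0 := ne_of_gt hv0'
  have h1v : (1 - v) ≠ 0 := by linarith
  have heq : 1 / u + 1 / (1 - u) = 1 / v + 1 / (1 - v) := by linarith
  field_simp at heq
  nlinarith [mul_pos hu0' hv0', sq_nonneg (u - v), sq_nonneg (u + v)]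

theorem stmt_10 (c : ℝ) (hc : 0 < c) :
    Set.Subsingleton {w₁ ∈ Set.Ico (0 : ℝ) (1 / 2) |
      w₁ * Real.log (2 * w₁) + (1 - w₁) * Real.log (2 * (1 - w₁))
        - c * (6 * (1 / 2 - w₁) ^ 2) = 0} := by
  intro a ha b hb
  obtain ⟨haI, ha0⟩ := ha
  obtain ⟨hbI, hb0⟩ := hb
  rw [gAux_eq c a haI] at ha0
  rw [gAux_eq c b hbI] at hb0
  by_contra hne
  rcases lt_or_gt_of_ne hne with h | h
  · exact key c hc a b haI hbI h ha0 hb0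
  · exact key c hc b a hbI haI h hb0 ha0
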